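/- Let f, g : ℕ → ℕ satisfy f(n) ≥ 1 and g(n) ≥ 1 for all n, limsup_n f(n) = ∞, limsup_n g(n) = ∞, and lim_{n→∞} f(n)/g(n) = 0. Then fN(f) ⊊ fN(g), i.e., fN(f) ⊆ fN(g) and there exists F ∈ fN(g) with F ∉ fN(f). -/

import Mathlib

open Filter Set

/-- The basic clopen set `[σ]` in the Baire space determined by a finite sequence `σ`. -/
def cylinder (σ : List ℕ) : Set (ℕ → ℕ) :=
  {x | ∀ i : Fin σ.length, x i = σ.get i}

/-- `limsup_n h(n) = ∞`, i.e. `h` takes arbitrarily large values frequently. -/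
def LimsupInfty (h : ℕ → ℕ) : Prop :=
  ∀ m : ℕ, ∃ᶠ n in Filter.atTop, m ≤ h n

/-- The family `fN(h)` of fake null sets: `F ∈ fN(h)` iff for every `ε > 0` there is a
sequence of finite sequences `σ_n` with `∑ 1/h(|σ_n|) < ε` covering `F`. -/
def fN (h : ℕ → ℕ) (F : Set (ℕ → ℕ)) : Prop :=
  ∀ ε : ℝ, 0 < ε →
    ∃ σ : ℕ → List ℕ,
      Summable (fun n => (1 : ℝ) / (h (σ n).length : ℝ)) ∧
      (∑' n, (1 : ℝ) / (h (σ n).length : ℝ)) < ε ∧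
      F ⊆ ⋃ n, cylinder (σ n)

/-- The restriction of `x` to the interval `[l, u)`, extended by `0` elsewhere. -/
def restrIco (x : ℕ → ℕ) (l u : ℕ) : ℕ → ℕ :=
  fun i => if l ≤ i ∧ i < u then x i else 0

/-- `J` is a set of patterns on the interval `[l, u)`: every element vanishes off `[l, u)`. -/
def SuppIco (l u : ℕ) (J : Set (ℕ → ℕ)) : Prop :=
  ∀ σ ∈ J, ∀ i, ¬ (l ≤ i ∧ i < u) → σ i = 0

/-- The family `fE(h)`: partition `ℕ` into consecutive nonempty intervals `I_n = [a n, a (n+1))`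
(`a 0 = 0`, `a` strictly increasing), patterns `J_n ⊆ ω^{I_n}` with `∑ |J_n|/h(|I_n|) < ∞`,
and `F ⊆ {x : x↾I_n ∈ J_n for all but finitely many n}`. -/
def fE (h : ℕ → ℕ) (F : Set (ℕ → ℕ)) : Prop :=
  ∃ a : ℕ → ℕ, a 0 = 0 ∧ StrictMono a ∧
    ∃ J : ℕ → Set (ℕ → ℕ),
      (∀ n, SuppIco (a n) (a (n+1)) (J n)) ∧
      (∀ n, (J n).Finite) ∧
      Summable (fun n => ((J n).ncard : ℝ) / (h (a (n+1) - a n) : ℝ)) ∧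
      F ⊆ {x | ∀ᶠ n in Filter.atTop, restrIco x (a n) (a (n+1)) ∈ J n}

/-- The family `fS(h)` of fake small sets: as `fE(h)` but with
`x↾I_n ∈ J_n` for infinitely many `n`. -/
def fS (h : ℕ → ℕ) (F : Set (ℕ → ℕ)) : Prop :=
  ∃ a : ℕ → ℕ, a 0 = 0 ∧ StrictMono a ∧
    ∃ J : ℕ → Set (ℕ → ℕ),
      (∀ n, SuppIco (a n) (a (n+1)) (J n)) ∧
      (∀ n, (J n).Finite) ∧
      Summable (fun n => ((J n).ncard : ℝ) / (h (a (n+1) - a n) : ℝ)) ∧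
      F ⊆ {x | ∃ᶠ n in Filter.atTop, restrIco x (a n) (a (n+1)) ∈ J n}

/-- The family `fE(Fin)`: as `fE(h)` but one only requires each pattern set `J_n` to be finite. -/
def fEFin (F : Set (ℕ → ℕ)) : Prop :=
  ∃ a : ℕ → ℕ, a 0 = 0 ∧ StrictMono a ∧
    ∃ J : ℕ → Set (ℕ → ℕ),
      (∀ n, SuppIco (a n) (a (n+1)) (J n)) ∧
      (∀ n, (J n).Finite) ∧
      F ⊆ {x | ∀ᶠ n in Filter.atTop, restrIco x (a n) (a (n+1)) ∈ J n}

/-- The family `fS(Fin)`: as `fS(h)` but one only requires each pattern set `J_n` to be finite. -/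
def fSFin (F : Set (ℕ → ℕ)) : Prop :=
  ∃ a : ℕ → ℕ, a 0 = 0 ∧ StrictMono a ∧
    ∃ J : ℕ → Set (ℕ → ℕ),
      (∀ n, SuppIco (a n) (a (n+1)) (J n)) ∧
      (∀ n, (J n).Finite) ∧
      F ⊆ {x | ∃ᶠ n in Filter.atTop, restrIco x (a n) (a (n+1)) ∈ J n}

/-- The family `fN(Fin)`: there are finite `S_n ⊆ ω^n` with
`F ⊆ {x : x↾n ∈ S_n for infinitely many n}`. -/
def fNFin (F : Set (ℕ → ℕ)) : Prop :=
  ∃ S : (n : ℕ) → Set (Fin n → ℕ),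
    (∀ n, (S n).Finite) ∧
    F ⊆ {x | ∃ᶠ n in Filter.atTop, (fun i : Fin n => x i) ∈ S n}

/-- The σ-ideal `M_-`: there are `x_F ∈ ω^ω` and a partition of `ℕ` into consecutive nonempty
intervals `I_n = [a n, a (n+1))` with `F ⊆ {x : x↾I_n ≠ x_F↾I_n for all but finitely many n}`. -/
def Mminus (F : Set (ℕ → ℕ)) : Prop :=
  ∃ xF : ℕ → ℕ, ∃ a : ℕ → ℕ, a 0 = 0 ∧ StrictMono a ∧
    F ⊆ {x | ∀ᶠ n in Filter.atTop, ∃ i, a n ≤ i ∧ i < a (n+1) ∧ x i ≠ xF i}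

lemma record_lemma (f g : ℕ → ℕ) (hglim : LimsupInfty g)
    (hratio : Filter.Tendsto (fun n => (f n : ℝ) / (g n : ℝ)) Filter.atTop (nhds 0))
    (hg1 : ∀ n, 1 ≤ g n)
    (ε : ℝ) (hε : 0 < ε) (M : ℕ) :
    ∃ L, M < L ∧ (1:ℝ) ≤ ε * g L ∧ ∀ k ≤ L, (f k : ℝ) ≤ ε * g L := by
  have hgpos : ∀ n, (0:ℝ) < g n := fun n => by exact_mod_cast (hg1 n)
  -- get N with f k < ε * g k for k ≥ N
  have hev : ∀ᶠ k in atTop, (f k : ℝ) / g k < ε := by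
    have := hratio.eventually (gt_mem_nhds hε)
    exact this
  obtain ⟨N, hN⟩ := hev.exists_forall_of_atTop
  have hNf : ∀ k, N ≤ k → (f k : ℝ) < ε * g k := by
    intro k hk
    have := hN k hk
    rwa [div_lt_iff₀ (hgpos k)] at this
  set C : ℝ := (∑ k ∈ Finset.range (N+1), (f k : ℝ)) + 1 with hC
  have hC1 : (1:ℝ) ≤ C := by
    have : (0:ℝ) ≤ ∑ k ∈ Finset.range (N+1), (f k : ℝ) :=
      Finset.sum_nonneg fun k _ => by positivity
    linarith
  have hCf : ∀ k ≤ N, (f k : ℝ) ≤ C := by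
    intro k hk
    have : (f k:ℝ) ≤ ∑ j ∈ Finset.range (N+1), (f j : ℝ) :=
      Finset.single_le_sum (f := fun j => (f j : ℝ)) (fun j _ => by positivity)
        (Finset.mem_range.mpr (Nat.lt_succ_of_le hk))
    linarith
  set G : ℕ := (Finset.range (max M N + 1)).sup g with hG
  set v : ℕ := max (⌈C/ε⌉₊) (G+1) with hv
  have hex : ∃ n, v ≤ g n := (hglim v).exists
  set L : ℕ := Nat.find hex with hL
  have hvL : v ≤ g L := Nat.find_spec hex
  have hmin : ∀ k, k < L → g k < v := by
    intro k hk
    have := Nat.find_min hex hk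
    omega
  have hLM : max M N < L := by
    by_contra h
    push_neg at h
    have : g L ≤ G := Finset.le_sup (Finset.mem_range.mpr (by omega))
    have : g L < v := by omega
    omega
  have hgmax : ∀ k ≤ L, g k ≤ g L := by
    intro k hk
    rcases lt_or_eq_of_le hk with h | h
    · exact le_of_lt (lt_of_lt_of_le (hmin k h) hvL)
    · rw [h]
  have hCv : C ≤ ε * g L := by
    have h1 : C/ε ≤ (v:ℝ) := le_trans (Nat.le_ceil _) (by exact_mod_cast Nat.le_max_left _ _)
    have h2 : (v:ℝ) ≤ g L := by exact_mod_cast hvL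
    calc C = ε * (C/ε) := by field_simp
    _ ≤ ε * g L := by exact mul_le_mul_of_nonneg_left (h1.trans h2) hε.le
  refine ⟨L, lt_of_le_of_lt (le_max_left _ _) hLM, le_trans hC1 hCv, ?_⟩
  intro k hk
  rcases le_or_gt k N with h | h
  · exact (hCf k h).trans hCv
  · have h1 := hNf k h.le
    have h2 : (g k : ℝ) ≤ g L := by exact_mod_cast hgmax k hk
    nlinarith [hgpos k]


lemma exists_b (f g : ℕ → ℕ) (hf1 : ∀ n, 1 ≤ f n) (hg1 : ∀ n, 1 ≤ g n)
    (hglim : LimsupInfty g)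
    (hratio : Filter.Tendsto (fun n => (f n : ℝ) / (g n : ℝ)) Filter.atTop (nhds 0)) :
    ∃ b : ℕ → ℕ, (∀ i, 1 ≤ b i) ∧
      (∀ L, 1 ≤ L → f L ≤ ∏ i ∈ Finset.range L, b i) ∧
      (∀ δ : ℝ, 0 < δ → ∃ L, ((∏ i ∈ Finset.range L, b i : ℕ) : ℝ) ≤ δ * g L) := by
  classical
  -- Fs L = sup of f on [0,L]
  set Fs : ℕ → ℕ := fun L => (Finset.range (L+1)).sup f with hFs
  have hFs1 : ∀ L, 1 ≤ Fs L := fun L =>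
    le_trans (hf1 0) (Finset.le_sup (Finset.mem_range.mpr (Nat.succ_pos L)))
  have hFsf : ∀ k L, k ≤ L → f k ≤ Fs L := fun k L hk =>
    Finset.le_sup (Finset.mem_range.mpr (by omega))
  have hFsle : ∀ L (x : ℝ), (∀ k ≤ L, (f k : ℝ) ≤ x) → (Fs L : ℝ) ≤ x := by
    intro L x hx
    obtain ⟨k, hk, hke⟩ := Finset.exists_mem_eq_sup (Finset.range (L+1))
      ⟨0, Finset.mem_range.mpr (Nat.succ_pos L)⟩ f
    rw [hFs]; simp only []
    rw [hke]
    exact hx k (by simpa using Nat.lt_succ_iff.mp (Finset.mem_range.mp hk))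
  -- step existence
  have step : ∀ (j : ℕ) (p : ℕ × ℕ), ∃ L', p.1 < L' ∧
      (Fs L' : ℝ) * p.2 ≤ (2:ℝ)⁻¹^(j+1) * g L' := by
    intro j p
    have hεpos : (0:ℝ) < (2:ℝ)⁻¹^(j+1) / (p.2+1) := by positivity
    obtain ⟨L', hL1, _hL2, hL3⟩ := record_lemma f g hglim hratio hg1 _ hεpos p.1
    refine ⟨L', hL1, ?_⟩
    have h1 : (Fs L' : ℝ) ≤ (2:ℝ)⁻¹^(j+1) / (p.2+1) * g L' := hFsle L' _ hL3
    have hFpos : (0:ℝ) ≤ (Fs L' : ℝ) := by positivity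
    have hgpos : (0:ℝ) ≤ (g L' : ℝ) := by positivity
    have h2 : (p.2 : ℝ) ≤ (p.2 : ℝ) + 1 := by linarith
    calc (Fs L' : ℝ) * p.2 ≤ ((2:ℝ)⁻¹^(j+1) / (p.2+1) * g L') * ((p.2:ℝ)+1) := by
          apply mul_le_mul h1 h2 (by positivity) (by positivity)
      _ = (2:ℝ)⁻¹^(j+1) * g L' := by field_simp
  choose Lstep hstep1 hstep2 using step
  -- the recursion
  obtain ⟨D, hD0, hDs⟩ : ∃ D : ℕ → ℕ × ℕ, D 0 = (0,1) ∧
      ∀ j, D (j+1) = (Lstep j (D j), (D j).2 * Fs (Lstep j (D j))) :=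
    ⟨fun n => Nat.rec (0,1) (fun j p => (Lstep j p, p.2 * Fs (Lstep j p))) n, rfl, fun j => rfl⟩
  set Ls : ℕ → ℕ := fun j => (D j).1 with hLs
  set Ms : ℕ → ℕ := fun j => (D j).2 with hMs
  have hLs0 : Ls 0 = 0 := by rw [hLs]; simp [hD0]
  have hMs0 : Ms 0 = 1 := by rw [hMs]; simp [hD0]
  have hLsucc : ∀ j, Ls (j+1) = Lstep j (D j) := fun j => by rw [hLs]; simp [hDs j]
  have hMsucc : ∀ j, Ms (j+1) = Ms j * Fs (Ls (j+1)) := fun j => by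
    rw [hMs, hLs]; simp [hDs j]
  have hLlt : ∀ j, Ls j < Ls (j+1) := fun j => by
    rw [hLsucc]; exact hstep1 j (D j)
  have hLmono : StrictMono Ls := strictMono_nat_of_lt_succ hLlt
  have hM1 : ∀ j, 1 ≤ Ms j := by
    intro j; induction j with
    | zero => rw [hMs0]
    | succ j ih =>
      rw [hMsucc]
      exact Nat.one_le_iff_ne_zero.mpr
        (Nat.mul_ne_zero (by omega) (by have := hFs1 (Ls (j+1)); omega))
  have hkey : ∀ j, (Ms (j+1) : ℝ) ≤ (2:ℝ)⁻¹^(j+1) * g (Ls (j+1)) := by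
    intro j
    have := hstep2 j (D j)
    rw [hMsucc]
    push_cast
    rw [hLsucc]
    calc (Ms j : ℝ) * (Fs (Lstep j (D j)) : ℝ)
        = (Fs (Lstep j (D j)) : ℝ) * (D j).2 := by rw [hMs]; ring
      _ ≤ _ := this
  -- define b
  set b : ℕ → ℕ := fun i => if h : ∃ j, Ls j = i then Fs (Ls (Classical.choose h + 1)) else 1
    with hb
  have hb1 : ∀ i, 1 ≤ b i := by
    intro i; rw [hb]; dsimp only
    split
    · exact hFs1 _
    · exact le_refl 1
  have hbLs : ∀ j, b (Ls j) = Fs (Ls (j+1)) := by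
    intro j
    have hex : ∃ k, Ls k = Ls j := ⟨j, rfl⟩
    have : Classical.choose hex = j := hLmono.injective (Classical.choose_spec hex)
    rw [hb]; dsimp only
    rw [dif_pos hex, this]
  have hbone : ∀ i, (∀ j, Ls j ≠ i) → b i = 1 := by
    intro i hi
    rw [hb]; dsimp only
    rw [dif_neg]; push_neg; exact hi
  have hbmid : ∀ j i, Ls j < i → i < Ls (j+1) → b i = 1 := by
    intro j i h1 h2
    apply hbone
    intro k hk
    rcases le_or_gt k j with h | h
    · have := hLmono.le_iff_le.mpr h; omega
    · have : Ls (j+1) ≤ Ls k := hLmono.le_iff_le.mpr h; omega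
  -- product over range L for Ls j < L ≤ Ls (j+1)
  have hprodgen : ∀ j L, Ls j < L → L ≤ Ls (j+1) →
      ∏ i ∈ Finset.range L, b i = (∏ i ∈ Finset.range (Ls j), b i) * Fs (Ls (j+1)) := by
    intro j L h1 h2
    rw [Finset.range_eq_Ico,
      ← Finset.prod_Ico_consecutive b (Nat.zero_le (Ls j)) h1.le]
    have hsplit : ∏ i ∈ Finset.Ico (Ls j) L, b i
        = b (Ls j) * ∏ i ∈ Finset.Ico (Ls j + 1) L, b i :=
      Finset.prod_eq_prod_Ico_succ_bot h1 b
    have hone : ∏ i ∈ Finset.Ico (Ls j + 1) L, b i = 1 := by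
      apply Finset.prod_eq_one
      intro i hi
      rw [Finset.mem_Ico] at hi
      exact hbmid j i (by omega) (by omega)
    rw [hsplit, hone, hbLs j, ← Finset.range_eq_Ico]
    ring
  have hprod : ∀ j, ∏ i ∈ Finset.range (Ls j), b i = Ms j := by
    intro j
    induction j with
    | zero => rw [hLs0, hMs0]; simp
    | succ j ih =>
      rw [hprodgen j (Ls (j+1)) (hLlt j) (le_refl _), ih, hMsucc]
  refine ⟨b, hb1, ?_, ?_⟩
  · -- f L ≤ B L for L ≥ 1
    intro L hL
    set j := Nat.findGreatest (fun j => Ls j < L) L with hj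
    have hP0 : Ls 0 < L := by rw [hLs0]; omega
    have hjlt : Ls j < L := by
      rw [hj]
      exact Nat.findGreatest_spec (P := fun k => Ls k < L) (Nat.zero_le L) hP0
    have hjL : j < L := lt_of_le_of_lt hLmono.le_apply hjlt
    have hle : L ≤ Ls (j+1) := by
      by_contra h
      push_neg at h
      have hgr : ¬ (Ls (j+1) < L) := by
        rw [hj]
        exact Nat.findGreatest_is_greatest (P := fun k => Ls k < L) (n := L)
          (by rw [← hj]; omega) (by omega)
      exact hgr h
    rw [hprodgen j L hjlt hle, hprod j]
    calc f L ≤ Fs (Ls (j+1)) := hFsf L _ hle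
      _ ≤ Ms j * Fs (Ls (j+1)) := Nat.le_mul_of_pos_left _ (hM1 j)
  · -- smallness
    intro δ hδ
    obtain ⟨n, hn⟩ := exists_pow_lt_of_lt_one hδ (by norm_num : (2:ℝ)⁻¹ < 1)
    refine ⟨Ls (n+1), ?_⟩
    rw [hprod (n+1)]
    calc (Ms (n+1) : ℝ) ≤ (2:ℝ)⁻¹^(n+1) * g (Ls (n+1)) := hkey n
      _ ≤ δ * g (Ls (n+1)) := by
          apply mul_le_mul_of_nonneg_right _ (by positivity)
          calc (2:ℝ)⁻¹^(n+1) ≤ (2:ℝ)⁻¹^n :=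
                pow_le_pow_of_le_one (by norm_num) (by norm_num) (by omega)
            _ ≤ δ := hn.le


lemma card_pi_range (b : ℕ → ℕ) (m : ℕ) :
    Fintype.card (∀ i : Fin m, Fin (b i)) = ∏ i ∈ Finset.range m, b i := by
  simp [Fintype.card_pi, Fin.prod_univ_eq_prod_range]

lemma counting (b : ℕ → ℕ) (hb : ∀ i, 1 ≤ b i) (σ : ℕ → List ℕ) (s : Finset ℕ) (L : ℕ)
    (hlen : ∀ n ∈ s, (σ n).length ≤ L)
    (hcov : {x : ℕ → ℕ | ∀ i, x i < b i} ⊆ ⋃ n ∈ s, cylinder (σ n)) :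
    (1 : ℝ) ≤ ∑ n ∈ s, (1 : ℝ) / ((∏ i ∈ Finset.range (σ n).length, b i : ℕ) : ℝ) := by
  classical
  set V := (∀ i : Fin L, Fin (b i)) with hV
  haveI : Nonempty V := ⟨fun i => ⟨0, hb i⟩⟩
  set ext : V → (ℕ → ℕ) := fun v i => if h : i < L then (v ⟨i, h⟩ : ℕ) else 0 with hext
  have hextF : ∀ v, ext v ∈ {x : ℕ → ℕ | ∀ i, x i < b i} := by
    intro v i
    simp only [hext, mem_setOf_eq]
    split
    · exact (v ⟨i, _⟩).isLt
    · exact hb i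
  have hchoice : ∀ v : V, ∃ n, n ∈ s ∧ ext v ∈ cylinder (σ n) := by
    intro v
    have := hcov (hextF v)
    simpa using this
  choose nf hnf hmem using hchoice
  -- the key cardinality bound
  have main : ∀ n ∈ s,
      (Finset.univ.filter (fun v : V => nf v = n)).card * ∏ i ∈ Finset.range (σ n).length, b i
        ≤ ∏ i ∈ Finset.range L, b i := by
    intro n hn
    set m := (σ n).length with hm
    have hmL : m ≤ L := hlen n hn
    set W := (∀ i : Fin m, Fin (b i)) with hW
    set Φ : {v : V // nf v = n} × W → V := fun p => fun i =>
      if h : (i : ℕ) < m then p.2 ⟨i, h⟩ else p.1.1 i with hΦ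
    have hΦinj : Function.Injective Φ := by
      rintro ⟨⟨v, hv⟩, y⟩ ⟨⟨v', hv'⟩, y'⟩ h
      have hcongr : ∀ i : Fin L, Φ (⟨⟨v, hv⟩, y⟩) i = Φ (⟨⟨v', hv'⟩, y'⟩) i :=
        fun i => congrFun h i
      have hy : y = y' := by
        funext i
        have := hcongr ⟨i, lt_of_lt_of_le i.isLt hmL⟩
        simp only [hΦ, dif_pos i.isLt] at this
        exact this
      have hvv : v = v' := by
        funext i
        by_cases h' : (i : ℕ) < m
        · -- determined by the cylinder
          have h1 : (i:ℕ) < (σ (nf v)).length := by rw [hv, ← hm]; exact h'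
          have h2 : (i:ℕ) < (σ (nf v')).length := by rw [hv', ← hm]; exact h'
          have e1 : (v i : ℕ) = (σ (nf v)).get ⟨i, h1⟩ := by
            have := hmem v ⟨i, h1⟩
            simp only [hext, dif_pos i.isLt] at this
            exact this
          have e2 : (v' i : ℕ) = (σ (nf v')).get ⟨i, h2⟩ := by
            have := hmem v' ⟨i, h2⟩
            simp only [hext, dif_pos i.isLt] at this
            exact this
          have e3 : (σ (nf v)).get ⟨i, h1⟩ = (σ (nf v')).get ⟨i, h2⟩ := by
            have hσ : σ (nf v) = σ (nf v') := by rw [hv, hv']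
            exact List.get_of_eq hσ ⟨i, h1⟩
          exact Fin.ext (e1.trans (e3.trans e2.symm))
        · have := hcongr i
          simp only [hΦ, dif_neg h'] at this
          exact this
      cases hy; cases hvv; rfl
    have hcard := Fintype.card_le_of_injective Φ hΦinj
    rw [Fintype.card_prod, Fintype.card_subtype] at hcard
    have cW : Fintype.card W = ∏ i ∈ Finset.range m, b i := card_pi_range b m
    have cV : Fintype.card V = ∏ i ∈ Finset.range L, b i := card_pi_range b L
    rw [cW, cV] at hcard
    exact hcard
  -- sum up
  have hcardV : Fintype.card V = ∏ i ∈ Finset.range L, b i := card_pi_range b L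
  have hBL : (0:ℝ) < ((∏ i ∈ Finset.range L, b i : ℕ) : ℝ) := by
    have : 0 < ∏ i ∈ Finset.range L, b i := Finset.prod_pos fun i _ => hb i
    exact_mod_cast this
  have hsum : (Finset.univ : Finset V).card = ∑ n ∈ s,
      (Finset.univ.filter (fun v : V => nf v = n)).card :=
    Finset.card_eq_sum_card_fiberwise fun v _ => hnf v
  have step1 : (1:ℝ) = ∑ n ∈ s,
      ((Finset.univ.filter (fun v : V => nf v = n)).card : ℝ)
        / ((∏ i ∈ Finset.range L, b i : ℕ) : ℝ) := by
    rw [← Finset.sum_div, eq_div_iff hBL.ne', one_mul]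
    have h2 : (∏ i ∈ Finset.range L, b i)
        = ∑ n ∈ s, (Finset.filter (fun v : V => nf v = n) Finset.univ).card := by
      rw [← hcardV, ← Finset.card_univ]; exact hsum
    exact_mod_cast h2
  refine step1.trans_le (Finset.sum_le_sum ?_)
  intro n hn
  have hBm : (0:ℝ) < ((∏ i ∈ Finset.range (σ n).length, b i : ℕ) : ℝ) := by
    have : 0 < ∏ i ∈ Finset.range (σ n).length, b i := Finset.prod_pos fun i _ => hb i
    exact_mod_cast this
  rw [div_le_div_iff₀ hBL hBm]
  have h4 : (((Finset.univ.filter (fun v : V => nf v = n)).card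
      * ∏ i ∈ Finset.range (σ n).length, b i : ℕ) : ℝ)
      ≤ ((∏ i ∈ Finset.range L, b i : ℕ) : ℝ) := by exact_mod_cast main n hn
  push_cast at h4 ⊢
  linarith


lemma cylinder_isOpen (σ : List ℕ) : IsOpen (cylinder σ) := by
  have : cylinder σ = ⋂ i : Fin σ.length, (fun x : ℕ → ℕ => x i) ⁻¹' {σ.get i} := by
    ext x; simp [cylinder, Set.mem_iInter]
  rw [this]
  exact isOpen_iInter_of_finite fun i =>
    (continuous_apply (i : ℕ)).isOpen_preimage _ (isOpen_discrete _)

lemma compactF (b : ℕ → ℕ) : IsCompact {x : ℕ → ℕ | ∀ i, x i < b i} := by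
  have : {x : ℕ → ℕ | ∀ i, x i < b i} = Set.univ.pi (fun i => Set.Iio (b i)) := by
    ext x; simp [Set.mem_pi]
  rw [this]
  exact isCompact_univ_pi fun i => (Set.finite_Iio _).isCompact

lemma notin_fN (f b : ℕ → ℕ) (hf1 : ∀ n, 1 ≤ f n) (hb : ∀ i, 1 ≤ b i)
    (hfB : ∀ L, 1 ≤ L → f L ≤ ∏ i ∈ Finset.range L, b i) :
    ¬ fN f {x : ℕ → ℕ | ∀ i, x i < b i} := by
  intro h
  have hf0 : (0:ℝ) < f 0 := by exact_mod_cast hf1 0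
  obtain ⟨σ, hsum, htsum, hcov⟩ := h ((1:ℝ)/f 0) (by positivity)
  obtain ⟨s, hs⟩ := (compactF b).elim_finite_subcover (fun n => cylinder (σ n))
    (fun n => cylinder_isOpen (σ n)) hcov
  set L := s.sup (fun n => (σ n).length) with hL
  have hlen : ∀ n ∈ s, (σ n).length ≤ L := fun n hn => by rw [hL]; exact Finset.le_sup (f := fun n => (σ n).length) hn
  have hcnt := counting b hb σ s L hlen hs
  -- pointwise : 1/B_m ≤ f 0 * (1/f m)
  have hpt : ∀ n, (1:ℝ) / ((∏ i ∈ Finset.range (σ n).length, b i : ℕ) : ℝ)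
      ≤ (f 0 : ℝ) * ((1:ℝ) / (f (σ n).length : ℝ)) := by
    intro n
    set m := (σ n).length
    have hfm : (0:ℝ) < f m := by exact_mod_cast hf1 m
    have hf01 : (1:ℝ) ≤ f 0 := by exact_mod_cast hf1 0
    have hBm : (0:ℝ) < ((∏ i ∈ Finset.range m, b i : ℕ) : ℝ) := by
      have : 0 < ∏ i ∈ Finset.range m, b i := Finset.prod_pos fun i _ => hb i
      exact_mod_cast this
    rw [mul_one_div, div_le_div_iff₀ hBm hfm]
    -- f m ≤ f 0 * B m
    rcases Nat.eq_zero_or_pos m with h0 | h0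
    · rw [h0]
      have : (1:ℝ) ≤ ((∏ i ∈ Finset.range 0, b i : ℕ) : ℝ) := by simp
      nlinarith
    · have h1 : (f m : ℝ) ≤ ((∏ i ∈ Finset.range m, b i : ℕ) : ℝ) := by
        exact_mod_cast hfB m h0
      nlinarith
  have h2 : ∑ n ∈ s, (1:ℝ) / ((∏ i ∈ Finset.range (σ n).length, b i : ℕ) : ℝ)
      ≤ (f 0 : ℝ) * ∑ n ∈ s, (1:ℝ) / (f (σ n).length : ℝ) := by
    rw [Finset.mul_sum]
    exact Finset.sum_le_sum fun n _ => hpt n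
  have h3 : ∑ n ∈ s, (1:ℝ) / (f (σ n).length : ℝ)
      ≤ ∑' n, (1:ℝ) / (f (σ n).length : ℝ) :=
    hsum.sum_le_tsum s (fun n _ => by positivity)
  have h4 : (f 0 : ℝ) * ∑' n, (1:ℝ) / (f (σ n).length : ℝ) < (f 0 : ℝ) * ((1:ℝ)/f 0) :=
    mul_lt_mul_of_pos_left htsum hf0
  rw [mul_one_div, div_self hf0.ne'] at h4
  have : (1:ℝ) < 1 := by
    calc (1:ℝ) ≤ _ := hcnt
      _ ≤ _ := h2
      _ ≤ (f 0 : ℝ) * ∑' n, (1:ℝ) / (f (σ n).length : ℝ) :=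
          mul_le_mul_of_nonneg_left h3 hf0.le
      _ < 1 := h4
  linarith


lemma mem_fNg (g b : ℕ → ℕ) (hg1 : ∀ n, 1 ≤ g n) (hb : ∀ i, 1 ≤ b i)
    (hglim : LimsupInfty g)
    (hδ : ∀ δ : ℝ, 0 < δ → ∃ L, ((∏ i ∈ Finset.range L, b i : ℕ) : ℝ) ≤ δ * g L) :
    fN g {x : ℕ → ℕ | ∀ i, x i < b i} := by
  intro ε hε
  classical
  obtain ⟨L, hLB⟩ := hδ (ε/4) (by positivity)
  -- tail lengths
  have htail : ∀ k : ℕ, ∃ ℓ, (2:ℝ)^(k+3)/ε ≤ g ℓ := by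
    intro k
    obtain ⟨ℓ, hℓ⟩ := (hglim ⌈(2:ℝ)^(k+3)/ε⌉₊).exists
    exact ⟨ℓ, le_trans (Nat.le_ceil _) (by exact_mod_cast hℓ)⟩
  choose ℓ hℓ using htail
  set V := (∀ i : Fin L, Fin (b i)) with hV
  haveI : Nonempty V := ⟨fun i => ⟨0, hb i⟩⟩
  set K := Fintype.card V with hK
  have hKpos : 0 < K := Fintype.card_pos
  have hKB : K = ∏ i ∈ Finset.range L, b i := card_pi_range b L
  set e : Fin K ≃ V := (Fintype.equivFin V).symm with he
  set σ : ℕ → List ℕ := fun n =>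
    if h : n < K then List.ofFn (fun i : Fin L => ((e ⟨n, h⟩) i : ℕ))
    else List.replicate (ℓ (n - K)) 0 with hσ
  have hlen : ∀ n, (σ n).length = if n < K then L else ℓ (n - K) := by
    intro n
    rw [hσ]; dsimp only
    split
    · exact List.length_ofFn
    · exact List.length_replicate
  have hgL : (0:ℝ) < g L := by exact_mod_cast hg1 L
  have hlenK : ∀ n, (σ (n + K)).length = ℓ n := by
    intro n
    rw [hlen, if_neg (by omega)]
    congr 1; omega
  have hlenlt : ∀ n (h : n < K), (σ n).length = L := fun n h => by rw [hlen, if_pos h]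
  have hpttail : ∀ n : ℕ, (1:ℝ) / (g ((σ (n + K)).length) : ℝ) ≤ ε / 8 * (1/2:ℝ)^n := by
    intro n
    rw [hlenK n]
    have h2 : (2:ℝ)^(n+3)/ε ≤ g (ℓ n) := hℓ n
    have h3 : (0:ℝ) < g (ℓ n) := by exact_mod_cast hg1 (ℓ n)
    have h4 : (2:ℝ)^(n+3) ≤ ε * g (ℓ n) := by
      rw [div_le_iff₀ hε] at h2; linarith
    have heq : ε / 8 * (1/2:ℝ)^n * (g (ℓ n) : ℝ) = ε * g (ℓ n) / (2:ℝ)^(n+3) := by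
      rw [pow_add, div_pow, one_pow]
      norm_num
      ring
    rw [div_le_iff₀ h3, heq, le_div_iff₀ (by positivity)]
    linarith
  have hsummbound : Summable (fun n : ℕ => ε / 8 * (1/2:ℝ)^n) :=
    summable_geometric_two.mul_left (ε/8)
  have hsummtail : Summable (fun n : ℕ => (1:ℝ) / (g ((σ (n + K)).length) : ℝ)) :=
    Summable.of_nonneg_of_le (fun n => by positivity) hpttail hsummbound
  have hsumm : Summable (fun n : ℕ => (1:ℝ) / (g ((σ n).length) : ℝ)) :=
    (summable_nat_add_iff K).mp hsummtail
  refine ⟨σ, hsumm, ?_, ?_⟩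
  · -- tsum < ε
    rw [← Summable.sum_add_tsum_nat_add K hsumm]
    have hhead : ∑ n ∈ Finset.range K, (1:ℝ) / (g ((σ n).length) : ℝ) ≤ ε / 4 := by
      have : ∀ n ∈ Finset.range K, (1:ℝ) / (g ((σ n).length) : ℝ) = 1 / g L := by
        intro n hn
        rw [hlenlt n (Finset.mem_range.mp hn)]
      rw [Finset.sum_congr rfl this, Finset.sum_const, Finset.card_range, nsmul_eq_mul]
      have hKle : (K:ℝ) ≤ ε/4 * g L := by rw [hKB]; exact_mod_cast hLB
      rw [mul_one_div, div_le_iff₀ hgL]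
      linarith
    have htailsum : ∑' n, (1:ℝ) / (g ((σ (n + K)).length) : ℝ) ≤ ε / 4 := by
      calc ∑' n, (1:ℝ) / (g ((σ (n + K)).length) : ℝ)
          ≤ ∑' n, ε / 8 * (1/2:ℝ)^n := hsummtail.tsum_le_tsum hpttail hsummbound
        _ = ε / 8 * ∑' n, (1/2:ℝ)^n := tsum_mul_left
        _ = ε / 4 := by rw [tsum_geometric_two]; ring
    linarith
  · -- cover
    intro x hx
    simp only [mem_setOf_eq] at hx
    set v : V := fun i : Fin L => (⟨x i, hx i⟩ : Fin (b i)) with hv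
    set n : Fin K := e.symm v with hn
    refine Set.mem_iUnion.mpr ⟨(n : ℕ), ?_⟩
    intro i
    have hnK : (n : ℕ) < K := n.isLt
    have hσn : σ (n : ℕ) = List.ofFn (fun i : Fin L => ((e ⟨(n : ℕ), hnK⟩) i : ℕ)) := by
      rw [hσ]; dsimp only; rw [dif_pos hnK]
    have hee : e ⟨(n : ℕ), hnK⟩ = v := by
      have : (⟨(n : ℕ), hnK⟩ : Fin K) = n := by ext; rfl
      rw [this, hn]
      exact e.apply_symm_apply v
    have hL1 : (σ (n:ℕ)).length = (List.ofFn (fun i : Fin L => ((e ⟨(n : ℕ), hnK⟩) i : ℕ))).length := by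
      rw [hσn]
    have hgl : (σ (n:ℕ)).get i
        = ((e ⟨(n : ℕ), hnK⟩) (Fin.cast List.length_ofFn (Fin.cast hL1 i)) : ℕ) := by
      rw [List.get_of_eq hσn, List.get_ofFn]
      rfl
    rw [hgl]
    have h5 := congrArg Fin.val
      (congrFun hee (Fin.cast List.length_ofFn (Fin.cast hL1 i)))
    rw [h5]
    rfl


lemma fN_mono (f g : ℕ → ℕ) (hf1 : ∀ n, 1 ≤ f n) (hg1 : ∀ n, 1 ≤ g n)
    (hratio : Filter.Tendsto (fun n => (f n : ℝ) / (g n : ℝ)) Filter.atTop (nhds 0))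
    (F : Set (ℕ → ℕ)) (hF : fN f F) : fN g F := by
  -- find C with f n ≤ C g n
  have hev : ∀ᶠ k in atTop, (f k : ℝ) / g k < 1 :=
    hratio.eventually (gt_mem_nhds one_pos)
  obtain ⟨N, hN⟩ := hev.exists_forall_of_atTop
  set C : ℝ := (∑ k ∈ Finset.range N, (f k : ℝ)) + 1 with hC
  have hC1 : (1:ℝ) ≤ C := by
    have : (0:ℝ) ≤ ∑ k ∈ Finset.range N, (f k : ℝ) :=
      Finset.sum_nonneg fun k _ => by positivity
    linarith
  have hCpos : (0:ℝ) < C := by linarith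
  have hfg : ∀ n, (f n : ℝ) ≤ C * g n := by
    intro n
    have hgpos : (0:ℝ) < g n := by exact_mod_cast hg1 n
    rcases le_or_gt N n with h | h
    · have := hN n h
      rw [div_lt_one hgpos] at this
      nlinarith
    · have h1 : (f n : ℝ) ≤ ∑ k ∈ Finset.range N, (f k : ℝ) :=
        Finset.single_le_sum (f := fun k => (f k : ℝ)) (fun k _ => by positivity)
          (Finset.mem_range.mpr h)
      have h2 : (1:ℝ) ≤ g n := by exact_mod_cast hg1 n
      nlinarith
  intro ε hε
  obtain ⟨σ, hsum, htsum, hcov⟩ := hF (ε/C) (by positivity)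
  have hpt : ∀ n, (1:ℝ) / (g (σ n).length : ℝ) ≤ C * ((1:ℝ) / (f (σ n).length : ℝ)) := by
    intro n
    set m := (σ n).length
    have hfm : (0:ℝ) < f m := by exact_mod_cast hf1 m
    have hgm : (0:ℝ) < g m := by exact_mod_cast hg1 m
    rw [mul_one_div, div_le_div_iff₀ hgm hfm, one_mul]
    exact hfg m
  have hsumg : Summable (fun n => (1:ℝ) / (g (σ n).length : ℝ)) :=
    Summable.of_nonneg_of_le (fun n => by positivity) hpt (hsum.mul_left C)
  refine ⟨σ, hsumg, ?_, hcov⟩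
  calc ∑' n, (1:ℝ) / (g (σ n).length : ℝ)
      ≤ ∑' n, C * ((1:ℝ) / (f (σ n).length : ℝ)) :=
        hsumg.tsum_le_tsum hpt (hsum.mul_left C)
    _ = C * ∑' n, (1:ℝ) / (f (σ n).length : ℝ) := tsum_mul_left
    _ < C * (ε/C) := mul_lt_mul_of_pos_left htsum hCpos
    _ = ε := by field_simp


theorem stmt16 (f g : ℕ → ℕ) (hf1 : ∀ n, 1 ≤ f n) (hg1 : ∀ n, 1 ≤ g n)
    (hflim : LimsupInfty f) (hglim : LimsupInfty g)
    (hratio : Filter.Tendsto (fun n => (f n : ℝ) / (g n : ℝ)) Filter.atTop (nhds 0)) :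
    (∀ F : Set (ℕ → ℕ), fN f F → fN g F) ∧
    (∃ F : Set (ℕ → ℕ), fN g F ∧ ¬ fN f F) := by
  obtain ⟨b, hb1, hfB, hδ⟩ := exists_b f g hf1 hg1 hglim hratio
  exact ⟨fun F hF => fN_mono f g hf1 hg1 hratio F hF,
    {x | ∀ i, x i < b i}, mem_fNg g b hg1 hb1 hglim hδ, notin_fN f b hf1 hb1 hfB⟩
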